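/- For all α₋, α₊ > 0 there exists x₀ ∈ ℝ such that W_{α₋,α₊}(x₀) < 8 and W_{α₋,α₊}(x₀) ≤ W_{α₋,α₊}(x) for all x ∈ ℝ; that is, the infimum of W_{α₋,α₊} over ℝ ∪ {∞} (with the value at ∞ equal to 8) is attained at a finite point. -/

import Mathlib

/-- The elastic energy `W_{α₋,α₊}(x)` of the pair of asymptotic-geodesic arcs
meeting at `(x, 0)` (eq. (3.22)). -/
noncomputable def Wenergy (αm αp x : ℝ) : ℝ :=
  8 + 8 * (αp * (x - 1) / (αp ^ 2 + (x - 1) ^ 2)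
    - αm * (x + 1) / (αm ^ 2 + (x + 1) ^ 2))

open Filter

private lemma term_tendsto (a c : ℝ) (ha : 0 < a) :
    Tendsto (fun x : ℝ => a * (x - c) / (a ^ 2 + (x - c) ^ 2)) (cocompact ℝ) (nhds 0) := by
  have hshift : Tendsto (fun x : ℝ => |x - c|) (cocompact ℝ) atTop := by
    have h1 : Tendsto (fun x : ℝ => x - c) (cocompact ℝ) (cocompact ℝ) := by
      rw [cocompact_eq_atBot_atTop]
      refine tendsto_sup.mpr ⟨?_, ?_⟩
      · exact (tendsto_atBot_add_const_right _ (-c)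
          (tendsto_id : Tendsto id atBot atBot)).mono_right le_sup_left
      · exact (tendsto_atTop_add_const_right _ (-c)
          (tendsto_id : Tendsto id atTop atTop)).mono_right le_sup_right
    simpa [Function.comp_def, Real.norm_eq_abs] using (tendsto_norm_cocompact_atTop.comp h1)
  refine squeeze_zero_norm (a := fun x : ℝ => a / |x - c|) (fun x => ?_)
    (Tendsto.div_atTop tendsto_const_nhds hshift)
  rcases eq_or_ne (x - c) 0 with h | h
  · simp [h]
  · have hpos : 0 < |x - c| := abs_pos.mpr h
    have hden : 0 < a ^ 2 + (x - c) ^ 2 := by positivity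
    rw [Real.norm_eq_abs, abs_div, abs_of_pos hden, div_le_div_iff₀ hden hpos]
    have habs : |a * (x - c)| = a * |x - c| := by
      rw [abs_mul, abs_of_pos ha]
    rw [habs]
    have h2 : (x - c) ^ 2 = |x - c| ^ 2 := (sq_abs _).symm
    nlinarith [abs_pos.mpr h, sq_abs (x - c), sq_nonneg a]

private lemma W_continuous (αm αp : ℝ) (hαm : 0 < αm) (hαp : 0 < αp) :
    Continuous (Wenergy αm αp) := by
  unfold Wenergy
  refine continuous_const.add (continuous_const.mul (Continuous.sub ?_ ?_))
  · exact (continuous_const.mul (continuous_id.sub continuous_const)).div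
      (by continuity) (fun x => by positivity)
  · exact (continuous_const.mul (continuous_id.add continuous_const)).div
      (by continuity) (fun x => by positivity)

theorem energy_infimum_attained (αm αp : ℝ) (hαm : 0 < αm) (hαp : 0 < αp) :
    ∃ x₀ : ℝ, Wenergy αm αp x₀ < 8 ∧ ∀ x : ℝ, Wenergy αm αp x₀ ≤ Wenergy αm αp x := by
  have hW : Tendsto (Wenergy αm αp) (cocompact ℝ) (nhds 8) := by
    have h1 := term_tendsto αp 1 hαp
    have h2 : Tendsto (fun x : ℝ => αm * (x + 1) / (αm ^ 2 + (x + 1) ^ 2))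
        (cocompact ℝ) (nhds 0) := by
      simpa [sub_neg_eq_add] using term_tendsto αm (-1) hαm
    have := (tendsto_const_nhds (x := (8:ℝ))).add
      ((tendsto_const_nhds (x := (8:ℝ))).mul (h1.sub h2))
    unfold Wenergy
    simpa using this
  have hlt : Wenergy αm αp (-1) < 8 := by
    have hden : (0:ℝ) < αp ^ 2 + 4 := by positivity
    have : Wenergy αm αp (-1) = 8 + 8 * (αp * (-2) / (αp ^ 2 + 4)) := by
      unfold Wenergy
      norm_num
    rw [this]
    have hneg : αp * (-2) / (αp ^ 2 + 4) < 0 :=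
      div_neg_of_neg_of_pos (by nlinarith) hden
    linarith
  have hev : ∀ᶠ x in cocompact ℝ, Wenergy αm αp (-1) ≤ Wenergy αm αp x := by
    filter_upwards [hW.eventually (eventually_gt_nhds hlt)] with x hx using hx.le
  obtain ⟨x₀, hx₀⟩ := (W_continuous αm αp hαm hαp).exists_forall_le' (-1) hev
  exact ⟨x₀, lt_of_le_of_lt (hx₀ (-1)) hlt, hx₀⟩
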